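/- If p' is any point in the projection of p - (1/L)∇Q(p) onto Ω_{k,p⁰,δ}, where Q(p) = ½ pᵀSp - fᵀp with S symmetric positive definite with largest eigenvalue λ₁ and L > λ₁, then Q(p) - Q(p') ≥ ((L-λ₁)/2)‖p' - p‖₂², provided p ∈ Ω_{k,p⁰,δ}. -/

import Mathlib

open Matrix

lemma quad_le_lam {n : ℕ} (S : Matrix (Fin n) (Fin n) ℝ) (hS : S.IsHermitian)
    (lam1 : ℝ) (h : ∀ i, hS.eigenvalues i ≤ lam1) (x : Fin n → ℝ) :
    x ⬝ᵥ S *ᵥ x ≤ lam1 * (x ⬝ᵥ x) := by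
  set U : Matrix (Fin n) (Fin n) ℝ := (hS.eigenvectorUnitary : Matrix (Fin n) (Fin n) ℝ) with hU
  have hstar : star U = Uᵀ := by
    ext i j; simp [conjTranspose_apply]
  set y : Fin n → ℝ := (star U) *ᵥ x with hy
  have hvm : x ᵥ* U = y := by rw [hy, hstar, mulVec_transpose]
  have hxx : x ⬝ᵥ x = y ⬝ᵥ y := by
    have h1 : U * star U = 1 := (Matrix.mem_unitaryGroup_iff).mp hS.eigenvectorUnitary.2
    calc x ⬝ᵥ x = x ⬝ᵥ (U * star U) *ᵥ x := by rw [h1, one_mulVec]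
    _ = y ⬝ᵥ y := by rw [← mulVec_mulVec, dotProduct_mulVec, hvm]
  have hmain : x ⬝ᵥ S *ᵥ x = ∑ i, hS.eigenvalues i * (y i)^2 := by
    conv_lhs => rw [hS.spectral_theorem]; simp only [Unitary.conjStarAlgAut_apply, Unitary.coe_star]
    rw [← mulVec_mulVec, ← mulVec_mulVec, dotProduct_mulVec, hvm]
    simp [dotProduct, mulVec_diagonal]
    exact Finset.sum_congr rfl fun i _ => by ring
  rw [hmain, hxx]
  rw [dotProduct, Finset.mul_sum]
  apply Finset.sum_le_sum
  intro i _
  nlinarith [sq_nonneg (y i), h i]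


theorem gradient_projection_decrease {n k : ℕ}
    (S : Matrix (Fin n) (Fin n) ℝ) (f p0 δ : Fin n → ℝ) (hPD : S.PosDef)
    (hδ : ∀ i, 0 < δ i)
    (Q : (Fin n → ℝ) → ℝ)
    (hQ : ∀ p, Q p = (1/2) * (p ⬝ᵥ S.mulVec p) - f ⬝ᵥ p)
    (lam1 : ℝ) (hlam1 : IsGreatest (Set.range hPD.1.eigenvalues) lam1)
    (L : ℝ) (hL : lam1 < L)
    (Ω : Set (Fin n → ℝ))
    (hΩ : Ω = {p | {i | p i ≠ p0 i}.ncard ≤ k ∧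
      ∀ i, p i = p0 i ∨ p0 i + δ i ≤ p i ∨ p i ≤ p0 i - δ i})
    (p p' : Fin n → ℝ) (hp : p ∈ Ω) (hp' : p' ∈ Ω)
    (hproj : ∀ p'' ∈ Ω,
      ∑ i, (p' i - (p i - (1/L) * (S.mulVec p - f) i)) ^ 2 ≤
        ∑ i, (p'' i - (p i - (1/L) * (S.mulVec p - f) i)) ^ 2) :
    Q p - Q p' ≥ ((L - lam1) / 2) * ∑ i, (p' i - p i) ^ 2 := by
  -- positivity of L
  obtain ⟨i0, hi0⟩ := hlam1.1
  have hlampos : 0 < lam1 := hi0 ▸ hPD.eigenvalues_pos i0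
  have hLpos : 0 < L := lt_trans hlampos hL
  set d : Fin n → ℝ := fun i => p' i - p i with hd
  set g : Fin n → ℝ := S *ᵥ p - f with hg
  -- Step A: projection inequality with p'' = p
  have hA := hproj p hp
  have e1 : ∀ i : Fin n, (p' i - (p i - (1/L) * g i))^2
      = (d i)^2 + (2/L)*(d i * g i) + ((1/L)*g i)^2 := by
    intro i; simp only [hd]; ring
  have e2 : ∀ i : Fin n, (p i - (p i - (1/L) * g i))^2 = ((1/L)*g i)^2 := by
    intro i; ring
  rw [Finset.sum_congr rfl (fun i _ => e1 i), Finset.sum_congr rfl (fun i _ => e2 i)] at hA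
  rw [Finset.sum_add_distrib, Finset.sum_add_distrib, ← Finset.mul_sum] at hA
  have key : ∑ i, d i * g i ≤ -(L/2) * ∑ i, (d i)^2 := by
    have h2 : ∑ i, (d i)^2 + (2/L) * ∑ i, d i * g i ≤ 0 := by linarith
    have h3 := mul_le_mul_of_nonneg_left h2 (le_of_lt hLpos)
    rw [mul_add, mul_zero, ← mul_assoc] at h3
    have : L * (2/L) = 2 := by field_simp
    rw [this] at h3
    nlinarith
  -- symmetry
  have hTr : Sᵀ = S := by
    have := hPD.1
    rw [Matrix.IsHermitian] at this
    conv_rhs => rw [← this]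
    ext i j; simp [conjTranspose_apply]
  have hsym : d ⬝ᵥ S *ᵥ p = p ⬝ᵥ S *ᵥ d := by
    rw [dotProduct_mulVec, ← mulVec_transpose, hTr, dotProduct_comm]
  -- Step B: exact decrease formula
  have hpd : p' = p + d := by ext i; simp [hd]
  have hB : Q p - Q p' = -(g ⬝ᵥ d) - (1/2) * (d ⬝ᵥ S *ᵥ d) := by
    rw [hQ, hQ, hpd]
    simp only [hg, mulVec_add, dotProduct_add, add_dotProduct, sub_dotProduct]
    rw [dotProduct_comm (S *ᵥ p) d, hsym]
    ring
  -- quadratic bound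
  have hquad : d ⬝ᵥ S *ᵥ d ≤ lam1 * (d ⬝ᵥ d) :=
    quad_le_lam S hPD.1 lam1 (fun i => hlam1.2 ⟨i, rfl⟩) d
  have hdd : d ⬝ᵥ d = ∑ i, (d i)^2 := by simp [dotProduct, sq]
  have hgd : g ⬝ᵥ d = ∑ i, d i * g i := by
    simp [dotProduct]; exact Finset.sum_congr rfl fun i _ => mul_comm _ _
  have htarget : ∑ i, (p' i - p i)^2 = ∑ i, (d i)^2 := rfl
  rw [htarget, hB, hgd]
  rw [hdd] at hquad
  nlinarith [Finset.sum_nonneg (fun i (_ : i ∈ Finset.univ) => sq_nonneg (d i))]
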